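/- The triangle K_3^2 can be immersed in a hypergraph G if and only if G contains a Berge cycle of length at least 3, or two edge-disjoint Berge cycles of length 2 sharing exactly one common vertex. -/

import Mathlib

/-- A finite hypergraph: a finite vertex set together with a finite multiset of
hyperedges (so multi-hyperedges are allowed), each hyperedge a subset of the vertex set. -/
structure MHypergraph (V : Type) where
  verts : Finset V
  edges : Multiset (Finset V)

/-- The vertex set spanned by a collection (multiset) of hyperedges. -/
def mVerts {V : Type} [DecidableEq V] (S : Multiset (Finset V)) : Finset V :=
  S.toFinset.sup id

/-- Reachability by a Berge path using only hyperedges from `S`. -/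
def mReach {V : Type} (S : Multiset (Finset V)) (u v : V) : Prop :=
  Relation.ReflTransGen (fun a b => ∃ f ∈ S, a ∈ f ∧ b ∈ f) u v

/-- A collection of hyperedges is connected if any two of its vertices are joined
by a Berge path within it. -/
def mConnected {V : Type} [DecidableEq V] (S : Multiset (Finset V)) : Prop :=
  ∀ u ∈ mVerts S, ∀ v ∈ mVerts S, mReach S u v

/-- An immersion of the hypergraph `H` in the hypergraph `G`: an injective map of
vertices together with an assignment (encoded by the multiset `P` of pairs) sending each
hyperedge of `H` to a nonempty connected sub-hypergraph of `G` containing the images of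
its ends, such that distinct hyperedges of `H` are mapped to edge-disjoint sub-hypergraphs
(encoded by requiring that the multiset sum of all images is contained in `G.edges`). -/
def MImmersion {V1 V2 : Type} [DecidableEq V2]
    (H : MHypergraph V1) (G : MHypergraph V2) : Prop :=
  ∃ (vmap : V1 → V2) (P : Multiset (Finset V1 × Multiset (Finset V2))),
    Set.MapsTo vmap ↑H.verts ↑G.verts ∧
    Set.InjOn vmap ↑H.verts ∧
    P.map Prod.fst = H.edges ∧
    (P.map Prod.snd).sum ≤ G.edges ∧
    ∀ p ∈ P, p.2 ≠ 0 ∧ mConnected p.2 ∧ ∀ v ∈ p.1, vmap v ∈ mVerts p.2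

/-- `G'` is a subgraph of `G`: obtained by deleting vertices and/or hyperedges. -/
def IsSubgraph {V : Type} (G' G : MHypergraph V) : Prop :=
  G'.verts ⊆ G.verts ∧ G'.edges ≤ G.edges

/-- Coalescence: merge two hyperedges sharing at least one vertex into their union. -/
def CoalStep {V : Type} [DecidableEq V] (G H : MHypergraph V) : Prop :=
  ∃ (e1 e2 : Finset V) (rest : Multiset (Finset V)),
    (e1 ∩ e2).Nonempty ∧ G.edges = e1 ::ₘ e2 ::ₘ rest ∧
    H.verts = G.verts ∧ H.edges = (e1 ∪ e2) ::ₘ rest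

/-- Dewetting: detach one vertex from a hyperedge of size at least 2. -/
def DewetStep {V : Type} [DecidableEq V] (G H : MHypergraph V) : Prop :=
  ∃ (e : Finset V) (v : V) (rest : Multiset (Finset V)),
    v ∈ e ∧ 2 ≤ e.card ∧ G.edges = e ::ₘ rest ∧
    H.verts = G.verts ∧ H.edges = (e.erase v) ::ₘ rest

/-- Hypergraph isomorphism: a bijection of vertex sets inducing a bijection of
hyperedge multisets. -/
def MIso {V1 V2 : Type} [DecidableEq V2] (G : MHypergraph V1) (H : MHypergraph V2) : Prop :=
  ∃ φ : V1 → V2, Set.BijOn φ ↑G.verts ↑H.verts ∧ H.edges = G.edges.map (Finset.image φ)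

/-- A Berge-cycle pattern of length `t`: `t` distinct vertices `v i` and `t` hyperedges
`e i` (taken as distinct copies) with `v i, v (i+1) ∈ e i`, indices mod `t`. -/
def CyclePattern {V : Type} (t : ℕ) (ht : 0 < t) (v : Fin t → V) (e : Fin t → Finset V) :
    Prop :=
  Function.Injective v ∧
  ∀ i : Fin t, v i ∈ e i ∧ v ⟨(↑i + 1) % t, Nat.mod_lt _ ht⟩ ∈ e i

/-- `G` contains a Berge cycle of length `t` (the requirement that the `t` hyperedges be
distinct copies in `G` is encoded by the multiset inclusion). -/
def HasBergeCycle {V : Type} (G : MHypergraph V) (t : ℕ) (ht : 0 < t) : Prop :=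
  ∃ (v : Fin t → V) (e : Fin t → Finset V),
    CyclePattern t ht v e ∧ Finset.univ.val.map e ≤ G.edges

/-- The triangle `K_3^2`. -/
def K32 : MHypergraph (Fin 3) :=
  ⟨Finset.univ, {({0, 1} : Finset (Fin 3)), {1, 2}, {0, 2}}⟩

set_option linter.unusedSectionVars false

namespace Stmt8
variable {V : Type} [DecidableEq V]

/-- next vertex of a walk: head's start, or the target `v` if empty -/
def nxt (v : V) : List (V × Finset V) → V
  | [] => v
  | (x, _) :: _ => x

/-- open Berge walk from `u` to `v` with step list `L`; consecutive vertices distinct -/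
def OW (S : Multiset (Finset V)) : V → V → List (V × Finset V) → Prop
  | u, v, [] => u = v
  | u, v, (x, f) :: L =>
      x = u ∧ f ∈ S ∧ u ∈ f ∧ nxt v L ∈ f ∧ u ≠ nxt v L ∧ OW S (nxt v L) v L

lemma nxt_append (v : V) (A B : List (V × Finset V)) :
    nxt v (A ++ B) = nxt (nxt v B) A := by
  cases A with
  | nil => rfl
  | cons p A => cases p; rfl

lemma ow_nxt {S : Multiset (Finset V)} {u v : V} {L : List (V × Finset V)}
    (h : OW S u v L) : nxt v L = u := by
  cases L with
  | nil => exact h.symm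
  | cons p L => cases p; exact h.1

lemma ow_append {S : Multiset (Finset V)} {u v : V} {A B : List (V × Finset V)} :
    OW S u v (A ++ B) ↔ OW S u (nxt v B) A ∧ OW S (nxt v B) v B := by
  induction A generalizing u with
  | nil =>
    simp only [List.nil_append]
    constructor
    · intro h; exact ⟨(ow_nxt h).symm, by rwa [ow_nxt h]⟩
    · rintro ⟨rfl, h⟩; exact h
  | cons p A ih =>
    cases p with
    | mk x f =>
      simp only [List.cons_append, OW, List.append_eq, nxt_append, ih]
      tauto

lemma ow_mono {S T : Multiset (Finset V)} (hST : ∀ f ∈ S, f ∈ T) {u v : V}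
    {L : List (V × Finset V)} (h : OW S u v L) : OW T u v L := by
  induction L generalizing u with
  | nil => exact h
  | cons p L ih =>
    cases p with
    | mk x f => exact ⟨h.1, hST _ h.2.1, h.2.2.1, h.2.2.2.1, h.2.2.2.2.1, ih h.2.2.2.2.2⟩

lemma ow_snd_mem {S : Multiset (Finset V)} {u v : V} {L : List (V × Finset V)}
    (h : OW S u v L) : ∀ f ∈ L.map Prod.snd, f ∈ S := by
  induction L generalizing u with
  | nil => simp
  | cons p L ih =>
    cases p with
    | mk x f =>
      intro g hg
      rcases List.mem_cons.1 hg with rfl | hg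
      · exact h.2.1
      · exact ih h.2.2.2.2.2 _ hg

lemma reach_to_ow {S : Multiset (Finset V)} {u v : V} (h : mReach S u v) :
    ∃ L, OW S u v L := by
  induction h using Relation.ReflTransGen.head_induction_on with
  | refl => exact ⟨[], rfl⟩
  | head hr _ ih =>
    rename_i a c _
    obtain ⟨L, hL⟩ := ih
    obtain ⟨f, hfS, haf, hcf⟩ := hr
    by_cases hac : a = c
    · exact ⟨L, by rwa [hac]⟩
    · exact ⟨(a, f) :: L, rfl, hfS, haf, by rwa [ow_nxt hL], by rwa [ow_nxt hL], by rw [ow_nxt hL]; exact hL⟩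

lemma nxt_cons (v : V) (p : V × Finset V) (l : List (V × Finset V)) :
    nxt v (p :: l) = p.1 := by cases p; rfl

lemma ow_cons {S : Multiset (Finset V)} {u v : V} {p : V × Finset V}
    {L : List (V × Finset V)} :
    OW S u v (p :: L) ↔
      p.1 = u ∧ p.2 ∈ S ∧ u ∈ p.2 ∧ nxt v L ∈ p.2 ∧ u ≠ nxt v L ∧ OW S (nxt v L) v L := by
  cases p; rfl

lemma ow_split {S : Multiset (Finset V)} {u v : V} {L : List (V × Finset V)}
    (h : OW S u v L) (i : ℕ) :
    OW S u (nxt v (L.drop i)) (L.take i) ∧ OW S (nxt v (L.drop i)) v (L.drop i) := by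
  have h' : OW S u v (L.take i ++ L.drop i) := by rw [List.take_append_drop]; exact h
  exact ow_append.1 h'

lemma ow_dedup {S : Multiset (Finset V)} :
    ∀ (n : ℕ) (L : List (V × Finset V)) (u v : V), L.length ≤ n →
    OW S u v L → ∃ L', OW S u v L' ∧ (L'.map Prod.snd).Nodup := by
  intro n
  induction n with
  | zero =>
    intro L u v hl h
    have : L = [] := List.length_eq_zero_iff.1 (Nat.le_zero.1 hl)
    subst this; exact ⟨[], h, by simp⟩
  | succ n ih =>
    intro L u v hl h
    by_cases hnd : (L.map Prod.snd).Nodup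
    · exact ⟨L, h, hnd⟩
    · rw [List.Nodup, List.pairwise_iff_getElem] at hnd
      push_neg at hnd
      obtain ⟨i, j, hi, hj, hij, heq⟩ := hnd
      rw [List.length_map] at hi hj
      rw [List.getElem_map, List.getElem_map] at heq
      have hdi : L.drop i = L[i] :: L.drop (i + 1) := List.drop_eq_getElem_cons hi
      have hdj : L.drop j = L[j] :: L.drop (j + 1) := List.drop_eq_getElem_cons hj
      have h1 := (ow_split h i).1
      have h2 := (ow_split h i).2
      rw [hdi, nxt_cons] at h1 h2
      have h3 := (ow_split h j).2
      rw [hdj, nxt_cons] at h3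
      rw [ow_cons] at h2 h3
      by_cases hcase : L[i].1 = nxt v (L.drop (j + 1))
      · have hw : OW S u v (L.take i ++ L.drop (j + 1)) := by
          refine ow_append.2 ⟨hcase ▸ h1, h3.2.2.2.2.2⟩
        refine ih _ u v ?_ hw
        have := List.length_take_le i L
        simp only [List.length_append, List.length_take, List.length_drop]
        omega
      · have hw : OW S u v (L.take i ++ L[i] :: L.drop (j + 1)) := by
          refine ow_append.2 ⟨?_, ?_⟩
          · rw [nxt_cons]; exact h1
          · rw [nxt_cons]
            refine ow_cons.2 ⟨rfl, h2.2.1, h2.2.2.1, ?_, hcase, h3.2.2.2.2.2⟩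
            rw [heq]; exact h3.2.2.2.1
        refine ih _ u v ?_ hw
        simp only [List.length_append, List.length_take, List.length_cons, List.length_drop]
        omega

lemma nxt_ne_nil {v : V} {L : List (V × Finset V)} (hL : L ≠ []) :
    nxt v L = (L[0]'(List.length_pos_iff.2 hL)).1 := by
  cases L with
  | nil => exact absurd rfl hL
  | cons p l => rw [nxt_cons]; rfl

lemma build_path {S : Multiset (Finset V)} {u v : V} (h : mReach S u v) (huv : u ≠ v) :
    ∃ L, OW S u v L ∧ L ≠ [] ∧ ((L.map Prod.snd : List (Finset V)) : Multiset (Finset V)) ≤ S := by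
  obtain ⟨L0, hL0⟩ := reach_to_ow h
  obtain ⟨L, hL, hnd⟩ := ow_dedup L0.length L0 u v le_rfl hL0
  refine ⟨L, hL, ?_, ?_⟩
  · rintro rfl; exact huv hL
  · refine (Multiset.le_iff_subset ?_).2 ?_
    · exact hnd
    · intro f hf
      exact ow_snd_mem hL f (Multiset.mem_coe.1 hf)

lemma ow_closed_getElem {S : Multiset (Finset V)} {u : V} {L : List (V × Finset V)}
    (h : OW S u u L) (i : ℕ) (hi : i < L.length) :
    L[i].1 ∈ L[i].2 ∧ (L[(i + 1) % L.length]'(Nat.mod_lt _ (Nat.pos_of_ne_zero (by omega)))).1 ∈ L[i].2 ∧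
      L[i].1 ≠ (L[(i + 1) % L.length]'(Nat.mod_lt _ (Nat.pos_of_ne_zero (by omega)))).1 := by
  have h3 := (ow_split h i).2
  rw [List.drop_eq_getElem_cons hi, nxt_cons, ow_cons] at h3
  have hw : nxt u (L.drop (i + 1)) = (L[(i + 1) % L.length]'(Nat.mod_lt _ (Nat.pos_of_ne_zero (by omega)))).1 := by
    by_cases hi1 : i + 1 < L.length
    · have hd : L.drop (i + 1) ≠ [] := by
        intro hc
        have : (L.drop (i+1)).length = L.length - (i+1) := List.length_drop
        rw [hc] at this
        simp at this; omega
      rw [nxt_ne_nil hd]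
      have hm : (i + 1) % L.length = i + 1 := Nat.mod_eq_of_lt hi1
      simp only [hm, List.getElem_drop]
    · have hlen : i + 1 = L.length := by omega
      have hd : L.drop (i + 1) = [] := List.drop_eq_nil_of_le (by omega)
      rw [hd]
      have hL0 : L ≠ [] := by intro hc; rw [hc] at hi; simp at hi
      have hu : nxt u L = u := ow_nxt h
      rw [nxt_ne_nil hL0] at hu
      have hm : (i + 1) % L.length = 0 := by rw [hlen, Nat.mod_self]
      show u = _
      simp only [hm]
      exact hu.symm
  rw [hw] at h3
  exact ⟨h3.2.2.1, h3.2.2.2.1, h3.2.2.2.2.1⟩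

lemma closed_to_cycle {G : MHypergraph V} {u : V} {L : List (V × Finset V)}
    (h : OW G.edges u u L) (hnd : (L.map Prod.fst).Nodup)
    (hle : ((L.map Prod.snd : List (Finset V)) : Multiset (Finset V)) ≤ G.edges)
    (h3 : 3 ≤ L.length) :
    ∃ t : ℕ, ∃ ht : 3 ≤ t, HasBergeCycle G t (Nat.lt_of_lt_of_le (by decide) ht) := by
  refine ⟨L.length, h3, (fun i => L[(i : ℕ)].1), (fun i => L[(i : ℕ)].2), ⟨?_, ?_⟩, ?_⟩
  · -- injectivity
    intro a b hab
    rw [List.nodup_iff_injective_getElem] at hnd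
    have ha : (a : ℕ) < (L.map Prod.fst).length := by simp [a.2]
    have hb : (b : ℕ) < (L.map Prod.fst).length := by simp [b.2]
    have : (⟨a, ha⟩ : Fin (L.map Prod.fst).length) = ⟨b, hb⟩ := by
      apply hnd
      simp only [List.getElem_map]
      exact hab
    exact Fin.ext (by simpa using congrArg Fin.val this)
  · intro i
    have := ow_closed_getElem h i i.2
    exact ⟨this.1, this.2.1⟩
  · have : Finset.univ.val.map (fun i : Fin L.length => L[(i : ℕ)].2) =
        ((L.map Prod.snd : List (Finset V)) : Multiset (Finset V)) := by
      rw [Fin.univ_val_map]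
      congr 1
      have : (fun i : Fin L.length => L[(i : ℕ)].2) = Prod.snd ∘ (fun i : Fin L.length => L[(i : ℕ)]) := rfl
      rw [this, ← List.map_ofFn, List.ofFn_getElem]
    rw [this]
    exact hle

lemma ow_not_single {S : Multiset (Finset V)} {u : V} {p : V × Finset V}
    (h : OW S u u [p]) : False := by
  rw [ow_cons] at h
  exact h.2.2.2.2.1 rfl

lemma extract2 {S : Multiset (Finset V)} {u : V} {L : List (V × Finset V)}
    (h : OW S u u L) (hlen : 2 ≤ L.length)
    (hcard : (L.map Prod.fst).toFinset.card ≤ 2) :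
    ∃ (y : V) (e : Fin 2 → Finset V), y ≠ u ∧
      CyclePattern 2 Nat.zero_lt_two ![u, y] e ∧
      (Finset.univ.val.map e : Multiset (Finset V)) ≤
        ((L.map Prod.snd : List (Finset V)) : Multiset (Finset V)) ∧
      (L.map Prod.fst).toFinset = {u, y} := by
  obtain ⟨p0, L1, rfl⟩ : ∃ p0 L1, L = p0 :: L1 := by
    cases L with
    | nil => simp at hlen
    | cons a l => exact ⟨a, l, rfl⟩
  obtain ⟨p1, R, rfl⟩ : ∃ p1 R, L1 = p1 :: R := by
    cases L1 with
    | nil => simp at hlen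
    | cons a l => exact ⟨a, l, rfl⟩
  rw [ow_cons] at h
  obtain ⟨hp0, hf0S, huf0, hyf0, huy, h'⟩ := h
  rw [nxt_cons] at hyf0 huy h'
  rw [ow_cons] at h'
  obtain ⟨-, hf1S, hyf1, hzf1, hyz, h''⟩ := h'
  -- the vertex set is {u, p1.1}
  have huy' : p1.1 ≠ u := fun hc => huy hc.symm
  have hVsub : ({u, p1.1} : Finset V) ⊆ ((p0 :: p1 :: R).map Prod.fst).toFinset := by
    intro x hx
    rcases Finset.mem_insert.1 hx with rfl | hx
    · simp [← hp0]
    · rw [Finset.mem_singleton] at hx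
      subst hx
      simp
  have hVeq : ((p0 :: p1 :: R).map Prod.fst).toFinset = {u, p1.1} := by
    refine (Finset.eq_of_subset_of_card_le hVsub ?_).symm
    calc ((p0 :: p1 :: R).map Prod.fst).toFinset.card ≤ 2 := hcard
    _ = ({u, p1.1} : Finset V).card := by rw [Finset.card_insert_of_notMem (by simpa using huy), Finset.card_singleton]
  -- the third vertex is u again
  have hz : nxt u R = u := by
    by_cases hR : R = []
    · subst hR; rfl
    · rw [nxt_ne_nil hR]
      have hmem : (R[0]'(List.length_pos_iff.2 hR)).1 ∈ ((p0 :: p1 :: R).map Prod.fst).toFinset := by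
        simp only [List.mem_toFinset, List.mem_map]
        exact ⟨R[0]'(List.length_pos_iff.2 hR), by simp [List.getElem_mem], rfl⟩
      rw [hVeq] at hmem
      rcases Finset.mem_insert.1 hmem with h1 | h1
      · exact h1
      · rw [Finset.mem_singleton] at h1
        rw [nxt_ne_nil hR] at hyz
        exact absurd h1.symm hyz
  rw [hz] at hzf1
  refine ⟨p1.1, ![p0.2, p1.2], huy', ⟨?_, ?_⟩, ?_, hVeq⟩
  · intro a b hab
    fin_cases a <;> fin_cases b <;> simp_all
  · intro i
    fin_cases i
    · exact ⟨huf0, hyf0⟩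
    · exact ⟨hyf1, hzf1⟩
  · have : (Finset.univ.val.map ![p0.2, p1.2] : Multiset (Finset V)) =
        (([p0.2, p1.2] : List (Finset V)) : Multiset (Finset V)) := by
      rw [Fin.univ_val_map]
      congr 1
    rw [this]
    refine Multiset.coe_le.2 (List.Sublist.subperm ?_)
    simp only [List.map_cons]
    exact ((List.nil_sublist _).cons₂ _).cons₂ _

lemma two_le_of_closed {S : Multiset (Finset V)} {u : V} {L : List (V × Finset V)}
    (h : OW S u u L) (hne : L ≠ []) : 2 ≤ L.length := by
  rcases L with _ | ⟨p, _ | ⟨q, R⟩⟩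
  · exact absurd rfl hne
  · exact absurd h ow_not_single
  · simp

lemma range_pair (a b : V) : Set.range ![a, b] = {a, b} := by
  ext x
  constructor
  · rintro ⟨i, rfl⟩
    fin_cases i
    · exact Set.mem_insert _ _
    · exact Set.mem_insert_of_mem _ rfl
  · rintro (rfl | rfl)
    · exact ⟨0, rfl⟩
    · exact ⟨1, rfl⟩

lemma key {G : MHypergraph V} :
    ∀ (n : ℕ) (L : List (V × Finset V)) (u : V), L.length ≤ n →
    OW G.edges u u L →
    ((L.map Prod.snd : List (Finset V)) : Multiset (Finset V)) ≤ G.edges →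
    3 ≤ (L.map Prod.fst).toFinset.card →
    ((∃ t : ℕ, ∃ ht : 3 ≤ t, HasBergeCycle G t (Nat.lt_of_lt_of_le (by decide) ht)) ∨
      (∃ (v1 v2 : Fin 2 → V) (e1 e2 : Fin 2 → Finset V),
        CyclePattern 2 Nat.zero_lt_two v1 e1 ∧ CyclePattern 2 Nat.zero_lt_two v2 e2 ∧
        Finset.univ.val.map e1 + Finset.univ.val.map e2 ≤ G.edges ∧
        (∃! x : V, x ∈ Set.range v1 ∧ x ∈ Set.range v2))) := by
  intro n
  induction n with
  | zero =>
    intro L u hl _ _ hcard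
    rw [List.length_eq_zero_iff.1 (Nat.le_zero.1 hl)] at hcard
    simp at hcard
  | succ n ih =>
    intro L u hl h hle hcard
    by_cases hnd : (L.map Prod.fst).Nodup
    · left
      refine closed_to_cycle h hnd hle ?_
      calc (3 : ℕ) ≤ (L.map Prod.fst).toFinset.card := hcard
        _ ≤ (L.map Prod.fst).length := (L.map Prod.fst).toFinset_card_le
        _ = L.length := List.length_map _
    · -- find a repeated vertex
      rw [List.Nodup, List.pairwise_iff_getElem] at hnd
      push_neg at hnd
      obtain ⟨i, j, hi, hj, hij, heq⟩ := hnd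
      rw [List.length_map] at hi hj
      rw [List.getElem_map, List.getElem_map] at heq
      -- decompose L = T ++ (M ++ B)
      set T := L.take i with hT
      set M := (L.drop i).take (j - i) with hM
      set B := L.drop j with hB
      have hMB : (L.drop i).drop (j - i) = B := by
        rw [List.drop_drop, hB]; congr 1; omega
      have hdec : T ++ (M ++ B) = L := by
        rw [hM, ← hMB, List.take_append_drop, hT, List.take_append_drop]
      have hBj : B = L[j] :: L.drop (j + 1) := List.drop_eq_getElem_cons hj
      have hnxi : nxt u (L.drop i) = L[i].1 := by
        rw [List.drop_eq_getElem_cons hi, nxt_cons]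
      have hnxB : nxt u B = L[i].1 := by rw [hBj, nxt_cons, ← heq]
      have h1 := (ow_split h i).1
      have h2 := (ow_split h i).2
      rw [hnxi] at h1 h2
      have h2a := (ow_split h2 (j - i)).1
      have h2b := (ow_split h2 (j - i)).2
      rw [hMB, hnxB] at h2a h2b
      rw [← hM] at h2a
      -- h2a : OW G.edges L[i].1 L[i].1 M ; h2b : OW G.edges L[i].1 u B
      have hTB : OW G.edges u u (T ++ B) := by
        refine ow_append.2 ⟨?_, ?_⟩
        · rw [hnxB]; exact h1
        · rw [hnxB]; exact h2b
      have hlenM : M.length = j - i := by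
        rw [hM, List.length_take, List.length_drop]; omega
      have hMne : M ≠ [] := by
        intro hc; rw [hc] at hlenM; simp at hlenM; omega
      have hBne : B ≠ [] := by
        intro hc; rw [hc] at hBj; exact absurd hBj.symm (List.cons_ne_nil _ _)
      have hM2 : 2 ≤ M.length := two_le_of_closed h2a hMne
      have hTB2 : 2 ≤ (T ++ B).length := two_le_of_closed hTB (by simp [hBne])
      have hlenTB : (T ++ B).length = L.length - (j - i) := by
        rw [List.length_append, hT, hB, List.length_take, List.length_drop]; omega
      -- sublist facts
      have hMsub : M.Sublist L := (List.take_sublist _ _).trans (List.drop_sublist _ _)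
      have hTBsub : (T ++ B).Sublist L := by
        rw [← hdec]
        exact (List.sublist_append_right M B).append_left T
      have hMle : ((M.map Prod.snd : List (Finset V)) : Multiset (Finset V)) ≤
          ((L.map Prod.snd : List (Finset V)) : Multiset (Finset V)) :=
        Multiset.coe_le.2 (hMsub.map Prod.snd).subperm
      have hTBle : (((T ++ B).map Prod.snd : List (Finset V)) : Multiset (Finset V)) ≤
          ((L.map Prod.snd : List (Finset V)) : Multiset (Finset V)) :=
        Multiset.coe_le.2 (hTBsub.map Prod.snd).subperm
      by_cases hc1 : 3 ≤ ((M.map Prod.fst).toFinset).card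
      · exact ih M L[i].1 (by omega) h2a (hMle.trans hle) hc1
      by_cases hc2 : 3 ≤ (((T ++ B).map Prod.fst).toFinset).card
      · exact ih (T ++ B) u (by omega) hTB (hTBle.trans hle) hc2
      -- two small closed walks
      obtain ⟨y1, e1, hy1, hcyc1, hce1, hV1⟩ := extract2 h2a hM2 (by omega)
      obtain ⟨y2, e2, hy2, hcyc2, hce2, hV2⟩ := extract2 hTB hTB2 (by omega)
      have hpTB : L[i].1 ∈ ({u, y2} : Finset V) := by
        rw [← hV2]
        simp only [List.mem_toFinset, List.mem_map]
        refine ⟨L[j], ?_, heq.symm⟩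
        rw [List.mem_append, hBj]
        exact Or.inr (List.mem_cons_self)
      have hVL : (L.map Prod.fst).toFinset =
          (M.map Prod.fst).toFinset ∪ ((T ++ B).map Prod.fst).toFinset := by
        rw [← hdec]
        ext x
        simp only [List.map_append, List.toFinset_append, Finset.mem_union]
        tauto
      rw [hVL, hV1, hV2] at hcard
      have hy1u : y1 ∉ ({u, y2} : Finset V) := by
        intro hc
        have hsub : ({L[i].1, y1} ∪ {u, y2} : Finset V) ⊆ {u, y2} := by
          intro x hx
          rcases Finset.mem_union.1 hx with hx | hx
          · rcases Finset.mem_insert.1 hx with rfl | hx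
            · exact hpTB
            · rw [Finset.mem_singleton] at hx; subst hx; exact hc
          · exact hx
        have hc2' : ({u, y2} : Finset V).card ≤ 2 := by
          refine le_trans (Finset.card_insert_le _ _) ?_
          simp
        have := (Finset.card_le_card hsub).trans hc2'
        omega
      right
      refine ⟨![L[i].1, y1], ![u, y2], e1, e2, hcyc1, hcyc2, ?_, ?_⟩
      · refine le_trans (add_le_add hce1 hce2) (le_trans (le_of_eq ?_) hle)
        rw [← hdec]
        simp only [List.map_append]
        rw [← Multiset.coe_add, ← Multiset.coe_add, ← Multiset.coe_add]
        abel
      · refine ⟨L[i].1, ⟨?_, ?_⟩, ?_⟩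
        · rw [range_pair]; exact Set.mem_insert _ _
        · rw [range_pair]
          rcases Finset.mem_insert.1 hpTB with hh | hh
          · exact Or.inl hh
          · exact Or.inr (Finset.mem_singleton.1 hh)
        · rintro x ⟨hx1, hx2⟩
          rw [range_pair] at hx1 hx2
          rcases hx1 with rfl | hx1
          · rfl
          · rw [Set.mem_singleton_iff] at hx1; subst hx1
            exfalso
            apply hy1u
            rcases hx2 with rfl | hx2
            · exact Finset.mem_insert_self _ _
            · rw [Set.mem_singleton_iff] at hx2; subst hx2
              exact Finset.mem_insert_of_mem (Finset.mem_singleton_self _)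

lemma ow_start_mem {S : Multiset (Finset V)} {u v : V} {L : List (V × Finset V)}
    (h : OW S u v L) (hne : L ≠ []) : u ∈ L.map Prod.fst := by
  cases L with
  | nil => exact absurd rfl hne
  | cons p l =>
    rcases p with ⟨x, f⟩
    rw [h.1]
    exact List.mem_cons_self

lemma forward {G : MHypergraph V} (h : MImmersion K32 G) :
    ((∃ t : ℕ, ∃ ht : 3 ≤ t, HasBergeCycle G t (Nat.lt_of_lt_of_le (by decide) ht)) ∨
      (∃ (v1 v2 : Fin 2 → V) (e1 e2 : Fin 2 → Finset V),
        CyclePattern 2 Nat.zero_lt_two v1 e1 ∧ CyclePattern 2 Nat.zero_lt_two v2 e2 ∧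
        Finset.univ.val.map e1 + Finset.univ.val.map e2 ≤ G.edges ∧
        (∃! x : V, x ∈ Set.range v1 ∧ x ∈ Set.range v2))) := by
  obtain ⟨vmap, P, hmaps, hinj, hfst, hsum, hprop⟩ := h
  -- split P into the three branch sets
  have hfst' : P.map Prod.fst = ({0, 1} : Finset (Fin 3)) ::ₘ ({1, 2} : Finset (Fin 3)) ::ₘ
      {({0, 2} : Finset (Fin 3))} := hfst
  obtain ⟨p1, hp1P, hp1fst, hrest1⟩ := (Multiset.map_eq_cons _ _ _ _).2 hfst'
  obtain ⟨p2, hp2P, hp2fst, hrest2⟩ := (Multiset.map_eq_cons _ _ _ _).2 hrest1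
  obtain ⟨p3, hp3P, hp3fst, -⟩ := (Multiset.map_eq_cons _ _ _ _).2 hrest2
  have hp2P' : p2 ∈ P := Multiset.mem_of_mem_erase hp2P
  have hp3P' : p3 ∈ P := Multiset.mem_of_mem_erase (Multiset.mem_of_mem_erase hp3P)
  -- edge-disjointness budget
  have hbudget : p1.2 + p2.2 + p3.2 ≤ G.edges := by
    refine le_trans ?_ hsum
    rw [← Multiset.cons_erase hp1P, Multiset.map_cons, Multiset.sum_cons]
    rw [← Multiset.cons_erase hp2P, Multiset.map_cons, Multiset.sum_cons]
    rw [← Multiset.cons_erase hp3P, Multiset.map_cons, Multiset.sum_cons]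
    rw [add_assoc]
    exact add_le_add le_rfl (add_le_add le_rfl (le_add_right le_rfl))
  have hmemG : ∀ q : Finset (Fin 3) × Multiset (Finset V), q ∈ P → ∀ f ∈ q.2, f ∈ G.edges := by
    intro q hq f hf
    refine Multiset.mem_of_le hsum ?_
    refine Multiset.mem_of_le (Multiset.le_sum_of_mem (Multiset.mem_map_of_mem _ hq)) hf
  -- the three branch vertices
  have h01 : (0 : Fin 3) ≠ 1 := by decide
  have hab : vmap 0 ≠ vmap 1 := fun hc => h01 (hinj (by simp [K32]) (by simp [K32]) hc)
  have hbc : vmap 1 ≠ vmap 2 := fun hc => (by decide : (1 : Fin 3) ≠ 2)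
    (hinj (by simp [K32]) (by simp [K32]) hc)
  have hca : vmap 2 ≠ vmap 0 := fun hc => (by decide : (2 : Fin 3) ≠ 0)
    (hinj (by simp [K32]) (by simp [K32]) hc)
  obtain ⟨-, hconn1, hends1⟩ := hprop p1 hp1P
  obtain ⟨-, hconn2, hends2⟩ := hprop p2 hp2P'
  obtain ⟨-, hconn3, hends3⟩ := hprop p3 hp3P'
  have hr1 : mReach p1.2 (vmap 0) (vmap 1) :=
    hconn1 _ (hends1 0 (by rw [hp1fst]; decide)) _ (hends1 1 (by rw [hp1fst]; decide))
  have hr2 : mReach p2.2 (vmap 1) (vmap 2) :=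
    hconn2 _ (hends2 1 (by rw [hp2fst]; decide)) _ (hends2 2 (by rw [hp2fst]; decide))
  have hr3 : mReach p3.2 (vmap 2) (vmap 0) :=
    hconn3 _ (hends3 2 (by rw [hp3fst]; decide)) _ (hends3 0 (by rw [hp3fst]; decide))
  obtain ⟨Q1, hQ1, hQ1ne, hQ1le⟩ := build_path hr1 hab
  obtain ⟨Q2, hQ2, hQ2ne, hQ2le⟩ := build_path hr2 hbc
  obtain ⟨Q3, hQ3, hQ3ne, hQ3le⟩ := build_path hr3 hca
  -- total closed walk
  have hmem1 := hmemG p1 hp1P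
  have hmem2 := hmemG p2 hp2P'
  have hmem3 := hmemG p3 hp3P'
  have hW : OW G.edges (vmap 0) (vmap 0) (Q1 ++ (Q2 ++ Q3)) := by
    have hn3 : nxt (vmap 0) Q3 = vmap 2 := ow_nxt hQ3
    have hn2 : nxt (vmap 0) (Q2 ++ Q3) = vmap 1 := by
      rw [nxt_append, hn3]; exact ow_nxt hQ2
    refine ow_append.2 ⟨?_, ?_⟩
    · rw [hn2]; exact ow_mono hmem1 hQ1
    · rw [hn2]
      refine ow_append.2 ⟨?_, ?_⟩
      · rw [hn3]; exact ow_mono hmem2 hQ2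
      · rw [hn3]; exact ow_mono hmem3 hQ3
  have hWle : (((Q1 ++ (Q2 ++ Q3)).map Prod.snd : List (Finset V)) : Multiset (Finset V)) ≤
      G.edges := by
    refine le_trans ?_ hbudget
    simp only [List.map_append, ← Multiset.coe_add]
    rw [← add_assoc]
    exact add_le_add (add_le_add hQ1le hQ2le) hQ3le
  have hWcard : 3 ≤ (((Q1 ++ (Q2 ++ Q3)).map Prod.fst).toFinset).card := by
    have hsub : ({vmap 0, vmap 1, vmap 2} : Finset V) ⊆
        ((Q1 ++ (Q2 ++ Q3)).map Prod.fst).toFinset := by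
      intro x hx
      simp only [List.mem_toFinset, List.map_append, List.mem_append]
      rcases Finset.mem_insert.1 hx with rfl | hx
      · exact Or.inl (ow_start_mem hQ1 hQ1ne)
      rcases Finset.mem_insert.1 hx with rfl | hx
      · exact Or.inr (Or.inl (ow_start_mem hQ2 hQ2ne))
      rw [Finset.mem_singleton] at hx
      subst hx
      exact Or.inr (Or.inr (ow_start_mem hQ3 hQ3ne))
    refine le_trans (le_of_eq ?_) (Finset.card_le_card hsub)
    rw [Finset.card_insert_of_notMem (by simp [hab, Ne.symm hca]),
      Finset.card_insert_of_notMem (by simp [hbc]), Finset.card_singleton]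
  exact key (Q1 ++ (Q2 ++ Q3)).length _ _ le_rfl hW hWle hWcard

lemma mem_mVerts {S : Multiset (Finset V)} {u : V} :
    u ∈ mVerts S ↔ ∃ f ∈ S, u ∈ f := by
  simp [mVerts, Finset.mem_sup, Multiset.mem_toFinset]

lemma mReach_symm {S : Multiset (Finset V)} {u v : V} (h : mReach S u v) :
    mReach S v u := by
  haveI : Std.Symm (fun a b : V => ∃ f ∈ S, a ∈ f ∧ b ∈ f) := ⟨by
    rintro a b ⟨f, hfS, haf, hbf⟩
    exact ⟨f, hfS, hbf, haf⟩⟩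
  exact Std.Symm.symm (r := Relation.ReflTransGen (fun a b : V => ∃ f ∈ S, a ∈ f ∧ b ∈ f)) _ _ h

lemma mconn_of_pivot {S : Multiset (Finset V)} {x : V} (hx : ∀ f ∈ S, x ∈ f) :
    mConnected S := by
  intro u hu w hw
  obtain ⟨f, hfS, huf⟩ := mem_mVerts.1 hu
  obtain ⟨g, hgS, hwg⟩ := mem_mVerts.1 hw
  refine Relation.ReflTransGen.trans (Relation.ReflTransGen.single ⟨f, hfS, huf, hx f hfS⟩)
    (Relation.ReflTransGen.single ⟨g, hgS, hx g hgS, hwg⟩)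

lemma mem_drop_finRange {t k : ℕ} {i : Fin t} :
    i ∈ (List.finRange t).drop k ↔ k ≤ (i : ℕ) := by
  constructor
  · intro h
    obtain ⟨m, hm, hget⟩ := List.getElem_of_mem h
    rw [List.getElem_drop, List.getElem_finRange] at hget
    subst hget
    simp
  · intro h
    have hlen : (i : ℕ) - k < ((List.finRange t).drop k).length := by
      simp [List.length_drop, List.length_finRange]
      omega
    refine List.mem_iff_getElem.2 ⟨(i : ℕ) - k, hlen, ?_⟩
    rw [List.getElem_drop, List.getElem_finRange]
    ext
    simp
    omega

lemma conn_chain {t : ℕ} (ht : 3 ≤ t) (v : Fin t → V) (e : Fin t → Finset V)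
    (hcyc : ∀ i : Fin t, v i ∈ e i ∧
      v ⟨((i : ℕ) + 1) % t, Nat.mod_lt _ (Nat.lt_of_lt_of_le (by decide) ht)⟩ ∈ e i) :
    mConnected ((((List.finRange t).drop 2).map e : List (Finset V)) : Multiset (Finset V)) := by
  set S : Multiset (Finset V) := ((((List.finRange t).drop 2).map e : List (Finset V)) : Multiset (Finset V)) with hS
  have hmemS : ∀ f, f ∈ S ↔ ∃ i : Fin t, 2 ≤ (i : ℕ) ∧ f = e i := by
    intro f
    rw [hS]
    simp only [Multiset.mem_coe, List.mem_map]
    constructor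
    · rintro ⟨i, hi, rfl⟩
      exact ⟨i, mem_drop_finRange.1 hi, rfl⟩
    · rintro ⟨i, hi, rfl⟩
      exact ⟨i, mem_drop_finRange.2 hi, rfl⟩
  have hv2 : (2 : ℕ) < t := by omega
  -- every vertex of index ≥ 2 reaches v ⟨2⟩
  have hreach : ∀ k : ℕ, ∀ h2 : 2 ≤ k, ∀ hk : k < t, mReach S (v ⟨2, hv2⟩) (v ⟨k, hk⟩) := by
    intro k
    induction k with
    | zero => intro h2; omega
    | succ k ihk =>
      intro h2 hk
      by_cases hk2 : k + 1 = 2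
      · have : (⟨k + 1, hk⟩ : Fin t) = ⟨2, hv2⟩ := by ext; simp [hk2]
        rw [this]
        exact Relation.ReflTransGen.refl
      · have hk2' : 2 ≤ k := by omega
        have hkt : k < t := by omega
        refine Relation.ReflTransGen.tail (ihk hk2' hkt) ?_
        refine ⟨e ⟨k, hkt⟩, (hmemS _).2 ⟨⟨k, hkt⟩, hk2', rfl⟩, (hcyc ⟨k, hkt⟩).1, ?_⟩
        have := (hcyc ⟨k, hkt⟩).2
        have hmod : (k + 1) % t = k + 1 := Nat.mod_eq_of_lt hk
        convert this using 2
        ext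
        simp [hmod]
  have hto2 : ∀ u ∈ mVerts S, mReach S u (v ⟨2, hv2⟩) := by
    intro u hu
    obtain ⟨f, hfS, huf⟩ := mem_mVerts.1 hu
    obtain ⟨i, hi2, rfl⟩ := (hmemS f).1 hfS
    refine Relation.ReflTransGen.trans
      (Relation.ReflTransGen.single ⟨e i, hfS, huf, (hcyc i).1⟩) ?_
    exact mReach_symm (hreach (i : ℕ) hi2 i.2)
  intro u hu w hw
  exact Relation.ReflTransGen.trans (hto2 u hu) (mReach_symm (hto2 w hw))

lemma cyc_next {t : ℕ} (ht0 : 0 < t) {v : Fin t → V} {e : Fin t → Finset V}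
    (hcyc : ∀ i : Fin t, v i ∈ e i ∧ v ⟨((i : ℕ) + 1) % t, Nat.mod_lt _ ht0⟩ ∈ e i)
    (i j : Fin t) (hj : ((i : ℕ) + 1) % t = (j : ℕ)) : v j ∈ e i := by
  have h := (hcyc i).2
  have hj' : j = ⟨((i : ℕ) + 1) % t, Nat.mod_lt _ ht0⟩ := by ext; exact hj.symm
  rw [hj']
  exact h

lemma backward1 {G : MHypergraph V} (hG : ∀ e ∈ G.edges, e ⊆ G.verts)
    {t : ℕ} (ht : 3 ≤ t) (hc : HasBergeCycle G t (Nat.lt_of_lt_of_le (by decide) ht)) :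
    MImmersion K32 G := by
  obtain ⟨v, e, ⟨hinj, hcyc⟩, hedges⟩ := hc
  have heG : ∀ i : Fin t, e i ∈ G.edges := by
    intro i
    refine Multiset.mem_of_le hedges ?_
    exact Multiset.mem_map_of_mem _ (Finset.mem_def.1 (Finset.mem_univ i))
  have ht0 : 0 < t := by omega
  have h1t : 1 < t := by omega
  have h2t : 2 < t := by omega
  have hvmem : ∀ i : Fin t, v i ∈ G.verts := fun i => hG _ (heG i) ((hcyc i).1)
  set S3 : Multiset (Finset V) :=
    ((((List.finRange t).drop 2).map e : List (Finset V)) : Multiset (Finset V)) with hS3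
  set i0 : Fin t := ⟨0, ht0⟩ with hi0
  set i1 : Fin t := ⟨1, h1t⟩ with hi1
  set i2 : Fin t := ⟨2, h2t⟩ with hi2
  have hv01 : v ⟨(0 + 1) % t, Nat.mod_lt _ ht0⟩ = v i1 := by congr 1; ext; simp [Nat.mod_eq_of_lt h1t, hi1]
  have hv12 : v ⟨(1 + 1) % t, Nat.mod_lt _ ht0⟩ = v i2 := by congr 1; ext; simp [Nat.mod_eq_of_lt h2t, hi2]
  refine ⟨fun k : Fin 3 => v ⟨(k : ℕ), by omega⟩,
    (({0, 1} : Finset (Fin 3)), ({e i0} : Multiset (Finset V))) ::ₘ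
    (({1, 2} : Finset (Fin 3)), ({e i1} : Multiset (Finset V))) ::ₘ
    (({0, 2} : Finset (Fin 3)), S3) ::ₘ 0, ?_, ?_, ?_, ?_, ?_⟩
  · intro x _
    exact hvmem _
  · intro x _ y _ hxy
    have := hinj hxy
    have hval : (x : ℕ) = (y : ℕ) := by simpa using this
    exact Fin.ext hval
  · rfl
  · simp only [Multiset.map_cons, Multiset.map_zero, Multiset.sum_cons, Multiset.sum_zero,
      add_zero]
    have htake : (List.finRange t).take 2 = [i0, i1] := by
      apply List.ext_getElem
      · simp [List.length_take, List.length_finRange]; omega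
      · intro k h1 h2
        rw [List.getElem_take, List.getElem_finRange]
        have hk2 : k < 2 := by simpa using h2
        interval_cases k
        · ext; simp [hi0]
        · ext; simp [hi1]
    have hsplit : (Finset.univ.val.map e : Multiset (Finset V)) =
        ({e i0} : Multiset (Finset V)) + ({e i1} + S3) := by
      rw [Fin.univ_val_map, List.ofFn_eq_map]
      conv_lhs => rw [← List.take_append_drop 2 (List.finRange t)]
      rw [List.map_append, htake]
      rw [← Multiset.coe_add]
      simp [Multiset.singleton_add, hS3]
    rw [← hsplit]
    exact hedges
  · intro p hp
    have hmemS3 : ∀ i : Fin t, 2 ≤ (i : ℕ) → e i ∈ S3 := by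
      intro i hi
      rw [hS3]
      exact Multiset.mem_coe.2 (List.mem_map.2 ⟨i, mem_drop_finRange.2 hi, rfl⟩)
    rcases Multiset.mem_cons.1 hp with rfl | hp
    · refine ⟨by simp, mconn_of_pivot (x := v i0) ?_, ?_⟩
      · intro f hf
        rw [Multiset.mem_singleton] at hf
        subst hf
        exact (hcyc i0).1
      · intro w hw
        simp only
        rcases Finset.mem_insert.1 hw with rfl | hw
        · exact mem_mVerts.2 ⟨e i0, Multiset.mem_singleton_self _, (hcyc i0).1⟩
        · rw [Finset.mem_singleton] at hw
          subst hw
          refine mem_mVerts.2 ⟨e i0, Multiset.mem_singleton_self _, ?_⟩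
          exact cyc_next ht0 hcyc i0 i1 (by simp [hi0, hi1, Nat.mod_eq_of_lt h1t])
    rcases Multiset.mem_cons.1 hp with rfl | hp
    · refine ⟨by simp, mconn_of_pivot (x := v i1) ?_, ?_⟩
      · intro f hf
        rw [Multiset.mem_singleton] at hf
        subst hf
        exact (hcyc i1).1
      · intro w hw
        simp only
        rcases Finset.mem_insert.1 hw with rfl | hw
        · exact mem_mVerts.2 ⟨e i1, Multiset.mem_singleton_self _, (hcyc i1).1⟩
        · rw [Finset.mem_singleton] at hw
          subst hw
          refine mem_mVerts.2 ⟨e i1, Multiset.mem_singleton_self _, ?_⟩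
          exact cyc_next ht0 hcyc i1 i2 (by simp [hi1, hi2, Nat.mod_eq_of_lt h2t])
    rcases Multiset.mem_cons.1 hp with rfl | hp
    · refine ⟨?_, conn_chain ht v e hcyc, ?_⟩
      · simp only [hS3, ne_eq, Multiset.coe_eq_zero, List.map_eq_nil_iff]
        intro hc
        have := congrArg List.length hc
        simp [List.length_drop, List.length_finRange] at this
        omega
      · intro w hw
        simp only
        have hlast : (t - 1) < t := by omega
        rcases Finset.mem_insert.1 hw with rfl | hw
        · refine mem_mVerts.2 ⟨e ⟨t - 1, hlast⟩, hmemS3 _ (by simp; omega), ?_⟩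
          refine cyc_next ht0 hcyc ⟨t - 1, hlast⟩ i0 ?_
          simp only [hi0]
          rw [Nat.sub_add_cancel (by omega), Nat.mod_self]
        · rw [Finset.mem_singleton] at hw
          subst hw
          exact mem_mVerts.2 ⟨e i2, hmemS3 i2 (by simp [hi2]), (hcyc i2).1⟩
    · exact absurd hp (Multiset.notMem_zero p)


lemma backward2 {G : MHypergraph V} (hG : ∀ e ∈ G.edges, e ⊆ G.verts)
    (v1 v2 : Fin 2 → V) (e1 e2 : Fin 2 → Finset V)
    (hc1 : CyclePattern 2 Nat.zero_lt_two v1 e1) (hc2 : CyclePattern 2 Nat.zero_lt_two v2 e2)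
    (hle : Finset.univ.val.map e1 + Finset.univ.val.map e2 ≤ G.edges)
    (hx : ∃! x : V, x ∈ Set.range v1 ∧ x ∈ Set.range v2) :
    MImmersion K32 G := by
  have key1 : ∀ i j : Fin 2, v1 i ∈ e1 j := by
    intro i j
    fin_cases i <;> fin_cases j
    · exact (hc1.2 0).1
    · exact cyc_next (by omega) hc1.2 1 0 (by decide)
    · exact cyc_next (by omega) hc1.2 0 1 (by decide)
    · exact (hc1.2 1).1
  have key2 : ∀ i j : Fin 2, v2 i ∈ e2 j := by
    intro i j
    fin_cases i <;> fin_cases j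
    · exact (hc2.2 0).1
    · exact cyc_next (by omega) hc2.2 1 0 (by decide)
    · exact cyc_next (by omega) hc2.2 0 1 (by decide)
    · exact (hc2.2 1).1
  obtain ⟨x, ⟨hx1, hx2⟩, huniq⟩ := hx
  obtain ⟨ia, hia⟩ := hx1
  obtain ⟨ib, hib⟩ := hx2
  set y1 := v1 (ia + 1) with hy1
  set y2 := v2 (ib + 1) with hy2
  have hxy1 : x ≠ y1 := by
    rw [← hia, hy1]
    intro hc
    have := hc1.1 hc
    have : ia ≠ ia + 1 := by fin_cases ia <;> decide
    exact this (hc1.1 hc)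
  have hxy2 : x ≠ y2 := by
    rw [← hib, hy2]
    intro hc
    have : ib ≠ ib + 1 := by fin_cases ib <;> decide
    exact this (hc2.1 hc)
  have hy1r : y1 ∈ Set.range v1 := ⟨ia + 1, rfl⟩
  have hy2r : y2 ∈ Set.range v2 := ⟨ib + 1, rfl⟩
  have hyy : y1 ≠ y2 := by
    intro hc
    exact hxy1 (huniq y1 ⟨hy1r, hc ▸ hy2r⟩).symm
  have hx_e1 : ∀ j : Fin 2, x ∈ e1 j := fun j => hia ▸ key1 ia j
  have hx_e2 : ∀ j : Fin 2, x ∈ e2 j := fun j => hib ▸ key2 ib j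
  have hy1_e1 : ∀ j : Fin 2, y1 ∈ e1 j := fun j => key1 _ j
  have hy2_e2 : ∀ j : Fin 2, y2 ∈ e2 j := fun j => key2 _ j
  have hE1 : ∀ j : Fin 2, e1 j ∈ G.edges := by
    intro j
    refine Multiset.mem_of_le hle (Multiset.mem_add.2 (Or.inl ?_))
    exact Multiset.mem_map_of_mem _ (Finset.mem_def.1 (Finset.mem_univ j))
  have hE2 : ∀ j : Fin 2, e2 j ∈ G.edges := by
    intro j
    refine Multiset.mem_of_le hle (Multiset.mem_add.2 (Or.inr ?_))
    exact Multiset.mem_map_of_mem _ (Finset.mem_def.1 (Finset.mem_univ j))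
  refine ⟨fun k : Fin 3 => if k = 0 then y1 else if k = 1 then y2 else x,
    (({0, 1} : Finset (Fin 3)), ({e1 1, e2 1} : Multiset (Finset V))) ::ₘ
    (({1, 2} : Finset (Fin 3)), ({e2 0} : Multiset (Finset V))) ::ₘ
    (({0, 2} : Finset (Fin 3)), ({e1 0} : Multiset (Finset V))) ::ₘ 0, ?_, ?_, ?_, ?_, ?_⟩
  · intro k _
    by_cases h0 : k = 0
    · simp only [h0, if_pos rfl]
      exact hG _ (hE1 0) (hy1_e1 0)
    by_cases h1 : k = 1
    · simp only [h0, h1, if_neg, if_pos rfl, reduceIte]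
      exact hG _ (hE2 0) (hy2_e2 0)
    · simp only [if_neg h0, if_neg h1]
      exact hG _ (hE1 0) (hx_e1 0)
  · intro z _ w _ h
    fin_cases z <;> fin_cases w <;> simp_all
  · rfl
  · simp only [Multiset.map_cons, Multiset.map_zero, Multiset.sum_cons, Multiset.sum_zero,
      add_zero]
    refine le_trans (le_of_eq ?_) hle
    rw [Fin.univ_val_map, Fin.univ_val_map]
    have h1 : List.ofFn e1 = [e1 0, e1 1] := by simp [List.ofFn_succ]
    have h2 : List.ofFn e2 = [e2 0, e2 1] := by simp [List.ofFn_succ]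
    rw [h1, h2]
    simp only [← Multiset.cons_coe, Multiset.coe_nil, Multiset.insert_eq_cons,
      ← Multiset.singleton_add, add_zero]
    abel
  · intro p hp
    rcases Multiset.mem_cons.1 hp with rfl | hp
    · refine ⟨by simp, mconn_of_pivot (x := x) ?_, ?_⟩
      · intro f hf
        rw [Multiset.insert_eq_cons] at hf
        have hf' : f ∈ (e1 1 ::ₘ {e2 1} : Multiset (Finset V)) := hf
        rcases Multiset.mem_cons.1 hf' with rfl | hf'
        · exact hx_e1 1
        · rw [Multiset.mem_singleton] at hf'
          subst hf'
          exact hx_e2 1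
      · intro w hw
        simp only
        rcases Finset.mem_insert.1 hw with rfl | hw
        · simp only [if_pos rfl]
          exact mem_mVerts.2 ⟨e1 1, Multiset.mem_cons_self _ _, hy1_e1 1⟩
        · rw [Finset.mem_singleton] at hw
          subst hw
          rw [if_neg (by decide : ¬(1 : Fin 3) = 0), if_pos rfl]
          exact mem_mVerts.2 ⟨e2 1,
            Multiset.mem_cons_of_mem (Multiset.mem_singleton_self _), hy2_e2 1⟩
    rcases Multiset.mem_cons.1 hp with rfl | hp
    · refine ⟨by simp, mconn_of_pivot (x := x) ?_, ?_⟩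
      · intro f hf
        rw [Multiset.mem_singleton] at hf
        subst hf
        exact hx_e2 0
      · intro w hw
        simp only
        rcases Finset.mem_insert.1 hw with rfl | hw
        · rw [if_neg (by decide : ¬(1 : Fin 3) = 0), if_pos rfl]
          exact mem_mVerts.2 ⟨e2 0, Multiset.mem_singleton_self _, hy2_e2 0⟩
        · rw [Finset.mem_singleton] at hw
          subst hw
          rw [if_neg (by decide : ¬(2 : Fin 3) = 0), if_neg (by decide : ¬(2 : Fin 3) = 1)]
          exact mem_mVerts.2 ⟨e2 0, Multiset.mem_singleton_self _, hx_e2 0⟩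
    rcases Multiset.mem_cons.1 hp with rfl | hp
    · refine ⟨by simp, mconn_of_pivot (x := x) ?_, ?_⟩
      · intro f hf
        rw [Multiset.mem_singleton] at hf
        subst hf
        exact hx_e1 0
      · intro w hw
        simp only
        rcases Finset.mem_insert.1 hw with rfl | hw
        · simp only [if_pos rfl]
          exact mem_mVerts.2 ⟨e1 0, Multiset.mem_singleton_self _, hy1_e1 0⟩
        · rw [Finset.mem_singleton] at hw
          subst hw
          rw [if_neg (by decide : ¬(2 : Fin 3) = 0), if_neg (by decide : ¬(2 : Fin 3) = 1)]
          exact mem_mVerts.2 ⟨e1 0, Multiset.mem_singleton_self _, hx_e1 0⟩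
    · exact absurd hp (Multiset.notMem_zero p)

end Stmt8

/-- `K_3^2` can be immersed in `G` iff `G` contains a Berge cycle of
length at least 3, or two edge-disjoint Berge cycles of length 2 sharing exactly one
common vertex. -/
theorem stmt8 {V : Type} [DecidableEq V] (G : MHypergraph V)
    (hG : ∀ e ∈ G.edges, e ⊆ G.verts) :
    MImmersion K32 G ↔
      ((∃ t : ℕ, ∃ ht : 3 ≤ t, HasBergeCycle G t (by omega)) ∨
        (∃ (v1 v2 : Fin 2 → V) (e1 e2 : Fin 2 → Finset V),
          CyclePattern 2 (by omega) v1 e1 ∧ CyclePattern 2 (by omega) v2 e2 ∧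
          Finset.univ.val.map e1 + Finset.univ.val.map e2 ≤ G.edges ∧
          (∃! x : V, x ∈ Set.range v1 ∧ x ∈ Set.range v2))) := by
  constructor
  · exact Stmt8.forward
  · rintro (⟨t, ht, hc⟩ | ⟨v1, v2, e1, e2, hc1, hc2, hle, hx⟩)
    · exact Stmt8.backward1 hG ht hc
    · exact Stmt8.backward2 hG v1 v2 e1 e2 hc1 hc2 hle hx
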